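/- arXiv:1504.04065 — 5 statements merged into one kernel-verified Lean document; each statement's English description precedes it below -/
import Mathlib

section
/- In any alternative ring, any subring generated by two elements is associative (Artin's theorem); equivalently, for all a, b in the ring, every product formed from a and b is independent of the placement of parentheses. -/
set_option linter.unusedSectionVars false

namespace ArtinAux

variable {A : Type*} [NonUnitalNonAssocRing A]

/-- generator picker -/
def gg (a b : A) : Bool → A := fun i => bif i then a else b

/-- right-normed evaluation of a word -/
def ev (a b : A) : List Bool → A
  | [] => 0
  | [x] => gg a b x
  | x :: y :: l => gg a b x * ev a b (y :: l)

lemma ev_cons (a b : A) (x : Bool) {l : List Bool} (hl : l ≠ []) :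
    ev a b (x :: l) = gg a b x * ev a b l := by
  cases l with
  | nil => exact absurd rfl hl
  | cons y l' => rfl

/-- the "zero associator with split first slot" statement -/
def GZ (a b : A) (p q r s : List Bool) : Prop :=
  (ev a b (p ++ q) * ev a b r) * ev a b s = ev a b (p ++ q) * (ev a b r * ev a b s)

variable (alt_left : ∀ x y : A, (x * x) * y = x * (x * y))
variable (alt_right : ∀ x y : A, (x * y) * y = x * (y * y))
variable {a b : A}

include alt_left alt_right

lemma lalt (x y z : A) : (x*y)*z + (y*x)*z = x*(y*z) + y*(x*z) := by
  have h1 := alt_left (x+y) z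
  have h2 := alt_left x z
  have h3 := alt_left y z
  simp only [add_mul, mul_add] at h1
  linear_combination (norm := abel1) h1 - h2 - h3

lemma ralt (x y z : A) : (x*y)*z + (x*z)*y = x*(y*z) + x*(z*y) := by
  have h1 := alt_right x (y+z)
  have h2 := alt_right x y
  have h3 := alt_right x z
  simp only [add_mul, mul_add] at h1
  linear_combination (norm := abel1) h1 - h2 - h3

lemma flex (x y : A) : (x * y) * x = x * (y * x) := by
  have h1 := lalt alt_left alt_right x y x
  have h2 := alt_right y x
  linear_combination (norm := abel1) h1 - h2

set_option maxHeartbeats 1000000 in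
lemma swap23_key (w x y z : A) :
    (((w * x) * y) * z) - ((w * x) * (y * z)) + (((w * y) * x) * z) - ((w * y) * (x * z)) = (w * ((x * y) * z) - w * (x * (y * z))) + (w * ((x * z) * y) - w * (x * (z * y))) - (x * ((y * w) * z) - x * (y * (w * z))) + (y * ((w * x) * z) - y * (w * (x * z))) + (((w * x) * z) * y - (w * (x * z)) * y) + (((x * w) * z) * y - (x * (w * z)) * y) := by
  have h1 := lalt alt_left alt_right (w * x) y z
  have h2 := lalt alt_left alt_right w (x * y) z
  have h3 := lalt alt_left alt_right w x (y * z)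
  have h4 := congrArg (fun t => t * z) (lalt alt_left alt_right w x y)
  simp only [add_mul] at h4
  have h5 := ralt alt_left alt_right (w * x) y z
  have h6 := lalt alt_left alt_right w x (z * y)
  have h7 := ralt alt_left alt_right w (x * z) y
  have h8 := lalt alt_left alt_right (w * y) x z
  have h9 := lalt alt_left alt_right w y (x * z)
  have h10 := congrArg (fun t => t * z) (lalt alt_left alt_right w y x)
  simp only [add_mul] at h10
  have h11 := congrArg (fun t => t * z) (ralt alt_left alt_right w y x)
  simp only [add_mul] at h11
  have h12 := ralt alt_left alt_right (x * w) y z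
  have h13 := congrArg (fun t => x * t) (ralt alt_left alt_right w y z)
  simp only [mul_add] at h13
  have h14 := congrArg (fun t => t * z) (ralt alt_left alt_right x w y)
  simp only [add_mul] at h14
  have h15 := ralt alt_left alt_right x (w * z) y
  have h16 := lalt alt_left alt_right x (y * w) z
  linear_combination (norm := abel1) h1 + h2 - h3 + h4 + h4 - h5 - h6 + h7 + h8 - h9 + h10 - h11 - h12 + h13 - h14 + h15 - h16

set_option maxHeartbeats 1000000 in
lemma swap12_key (w x y z : A) :
    (((w * x) * y) * z) - ((w * x) * (y * z)) + (((x * w) * y) * z) - ((x * w) * (y * z)) = (w * ((x * y) * z) - w * (x * (y * z))) + (w * ((x * y) * z) - w * (x * (y * z))) + (((x * y) * z) * w - (x * (y * z)) * w) + (w * ((x * z) * y) - w * (x * (z * y))) - (w * ((y * x) * z) - w * (y * (x * z))) - (w * ((z * x) * y) - w * (z * (x * y))) + (x * ((w * y) * z) - x * (w * (y * z))) + (((w * y) * z) * x - (w * (y * z)) * x) + (x * ((y * z) * w) - x * (y * (z * w))) - (x * ((z * w) * y) - x * (z * (w * y))) + (((w * x) * z) * y - (w * (x * z)) * y) + (((w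 * x) * z) * y - (w * (x * z)) * y) + (((x * w) * z) * y - (x * (w * z)) * y) - (((x * z) * w) * y - (x * (z * w)) * y) := by
  have h1 := lalt alt_left alt_right w (x * y) z
  have h2 := lalt alt_left alt_right w x (y * z)
  have h3 := congrArg (fun t => t * z) (lalt alt_left alt_right w x y)
  simp only [add_mul] at h3
  have h4 := ralt alt_left alt_right (w * x) y z
  have h5 := ralt alt_left alt_right w (x * y) z
  have h6 := ralt alt_left alt_right w x (y * z)
  have h7 := lalt alt_left alt_right w (x * z) y
  have h8 := lalt alt_left alt_right w x (z * y)
  have h9 := congrArg (fun t => t * y) (ralt alt_left alt_right w x z)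
  simp only [add_mul] at h9
  have h10 := lalt alt_left alt_right (w * y) x z
  have h11 := ralt alt_left alt_right (w * y) x z
  have h12 := congrArg (fun t => w * t) (ralt alt_left alt_right y x z)
  simp only [mul_add] at h12
  have h13 := ralt alt_left alt_right w y (z * x)
  have h14 := lalt alt_left alt_right (w * z) x y
  have h15 := ralt alt_left alt_right (x * w) y z
  have h16 := ralt alt_left alt_right x (w * y) z
  have h17 := ralt alt_left alt_right x w (y * z)
  have h18 := congrArg (fun t => x * t) (ralt alt_left alt_right w y z)
  simp only [mul_add] at h18
  have h19 := ralt alt_left alt_right (x * y) w z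
  have h20 := ralt alt_left alt_right x y (z * w)
  linear_combination (norm := abel1) h1 - h2 - h2 - h2 + h3 + h3 - h4 + h5 + h6 + h7 - h8 - h9 + h10 - h11 + h12 - h13 + h14 - h15 + h16 + h17 + h18 - h19 - h20


section Induction

variable {n : ℕ}
  (app : ∀ p q : List Bool, p ≠ [] → q ≠ [] → p.length + q.length < n →
    ev a b (p ++ q) = ev a b p * ev a b q)
  (ihz : ∀ p q r : List Bool, p ≠ [] → q ≠ [] → r ≠ [] →
    p.length + q.length + r.length < n →
    (ev a b p * ev a b q) * ev a b r = ev a b p * (ev a b q * ev a b r))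

include app ihz

omit app ihz in
lemma gswap34 (p q r s : List Bool) (h : GZ a b p q s r) : GZ a b p q r s := by
  unfold GZ at h ⊢
  linear_combination (norm := abel1)
    ralt alt_left alt_right (ev a b (p ++ q)) (ev a b r) (ev a b s) - h

omit app ihz in
lemma gresplit {p q p' q' r s : List Bool} (h : p ++ q = p' ++ q')
    (h' : GZ a b p' q' r s) : GZ a b p q r s := by
  unfold GZ at h' ⊢
  rw [h]
  exact h'

set_option maxHeartbeats 1000000 in
lemma gswap23 {p q r s : List Bool} (hp : p ≠ []) (hq : q ≠ []) (hr : r ≠ []) (hs : s ≠ [])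
    (hlen : p.length + q.length + r.length + s.length ≤ n)
    (h : GZ a b p r q s) : GZ a b p q r s := by
  have l1 := List.length_pos_of_ne_nil hp
  have l2 := List.length_pos_of_ne_nil hq
  have l3 := List.length_pos_of_ne_nil hr
  have l4 := List.length_pos_of_ne_nil hs
  have e1 : ev a b (p ++ q) = ev a b p * ev a b q := app p q hp hq (by omega)
  have e2 : ev a b (p ++ r) = ev a b p * ev a b r := app p r hp hr (by omega)
  unfold GZ at h ⊢
  rw [e1]
  rw [e2] at h
  have key := swap23_key alt_left alt_right (ev a b p) (ev a b q) (ev a b r) (ev a b s)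
  simp only [ihz q r s hq hr hs (by omega), ihz q s r hq hs hr (by omega),
    ihz r p s hr hp hs (by omega), ihz p q s hp hq hs (by omega),
    ihz q p s hq hp hs (by omega)] at key
  linear_combination (norm := abel1) key - h

set_option maxHeartbeats 1000000 in
lemma gswap12 {p q r s : List Bool} (hp : p ≠ []) (hq : q ≠ []) (hr : r ≠ []) (hs : s ≠ [])
    (hlen : p.length + q.length + r.length + s.length ≤ n)
    (h : GZ a b q p r s) : GZ a b p q r s := by
  have l1 := List.length_pos_of_ne_nil hp
  have l2 := List.length_pos_of_ne_nil hq
  have l3 := List.length_pos_of_ne_nil hr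
  have l4 := List.length_pos_of_ne_nil hs
  have e1 : ev a b (p ++ q) = ev a b p * ev a b q := app p q hp hq (by omega)
  have e2 : ev a b (q ++ p) = ev a b q * ev a b p := app q p hq hp (by omega)
  unfold GZ at h ⊢
  rw [e1]
  rw [e2] at h
  have key := swap12_key alt_left alt_right (ev a b p) (ev a b q) (ev a b r) (ev a b s)
  simp only [ihz q r s hq hr hs (by omega), ihz q s r hq hs hr (by omega),
    ihz r q s hr hq hs (by omega), ihz s q r hs hq hr (by omega),
    ihz p r s hp hr hs (by omega), ihz r s p hr hs hp (by omega),
    ihz s p r hs hp hr (by omega), ihz p q s hp hq hs (by omega),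
    ihz q p s hq hp hs (by omega), ihz q s p hq hs hp (by omega)] at key
  linear_combination (norm := abel1) key - h

lemma gfront {p t r s : List Bool} {c : Bool} (hp : p ≠ []) (hr : r ≠ []) (hs : s ≠ [])
    (hlen : p.length + (c :: t).length + r.length + s.length ≤ n)
    (hz : ∀ p' : List Bool, p' ≠ [] → p'.length = p.length + t.length → GZ a b p' [c] r s) :
    GZ a b p (c :: t) r s := by
  cases t with
  | nil => exact hz p hp (by simp)
  | cons d t' =>
    apply gresplit alt_left alt_right (p' := p ++ [c]) (q' := d :: t')
      (by simp)
    apply gswap12 alt_left alt_right app ihz (by simp) (by simp) hr hs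
      (by simp only [List.length_cons, List.length_append,
            List.length_singleton, List.length_nil] at hlen ⊢; omega)
    apply gresplit alt_left alt_right (p' := (d :: t') ++ p) (q' := [c])
      (by simp)
    exact hz ((d :: t') ++ p) (by simp)
      (by simp only [List.length_append, List.length_cons]; omega)

omit app ihz in
lemma glast' (x y : List Bool) (c : Bool) : GZ a b x y [c] [c] := by
  unfold GZ
  exact alt_right _ _

lemma gcore {p q1 r s1 : List Bool} {c : Bool} (hp : p ≠ []) (hr : r ≠ [])
    (hlen : p.length + (c :: q1).length + r.length + (c :: s1).length ≤ n) :
    GZ a b p (c :: q1) r (c :: s1) := by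
  have l1 := List.length_pos_of_ne_nil hp
  have l3 := List.length_pos_of_ne_nil hr
  simp only [List.length_cons] at hlen
  apply gfront alt_left alt_right app ihz hp hr (by simp)
    (by simp only [List.length_cons]; omega)
  intro p' hp' hlp'
  apply gswap23 alt_left alt_right app ihz hp' (by simp) hr (by simp)
    (by simp only [List.length_cons, List.length_singleton, List.length_nil]; omega)
  apply gswap12 alt_left alt_right app ihz hp' hr (by simp) (by simp)
    (by simp only [List.length_cons, List.length_singleton, List.length_nil]; omega)
  apply gswap34 alt_left alt_right
  apply gswap23 alt_left alt_right app ihz hr hp' (by simp) (by simp)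
    (by simp only [List.length_cons, List.length_singleton, List.length_nil]; omega)
  apply gfront alt_left alt_right app ihz hr hp' (by simp)
    (by simp only [List.length_cons, List.length_singleton, List.length_nil]; omega)
  intro r' hr' hlr'
  apply gswap23 alt_left alt_right app ihz hr' (by simp) hp' (by simp)
    (by simp only [List.length_cons, List.length_singleton, List.length_nil]; omega)
  exact glast' alt_left alt_right r' p' c

lemma gzero {p q r s : List Bool} (hp : p ≠ []) (hq : q ≠ []) (hr : r ≠ []) (hs : s ≠ [])
    (hlen : p.length + q.length + r.length + s.length ≤ n) :
    GZ a b p q r s := by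
  rcases p with _ | ⟨cp, p1⟩; · exact absurd rfl hp
  rcases q with _ | ⟨cq, q1⟩; · exact absurd rfl hq
  rcases r with _ | ⟨cr, r1⟩; · exact absurd rfl hr
  rcases s with _ | ⟨cs, s1⟩; · exact absurd rfl hs
  by_cases h24 : cq = cs
  · subst h24
    exact gcore alt_left alt_right app ihz hp hr hlen
  by_cases h13 : cp = cr
  · subst h13
    apply gswap12 alt_left alt_right app ihz (by simp) (by simp) (by simp) (by simp) hlen
    apply gswap34 alt_left alt_right
    exact gcore alt_left alt_right app ihz (by simp) (by simp)
      (by simp only [List.length_cons] at hlen ⊢; omega)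
  · have hcp : cp = cq ∨ cp = cs := by
      cases cp <;> cases cq <;> cases cs <;> simp_all
    rcases hcp with h | h
    · subst h
      apply gswap23 alt_left alt_right app ihz (by simp) (by simp) (by simp) (by simp) hlen
      apply gswap12 alt_left alt_right app ihz (by simp) (by simp) (by simp) (by simp)
        (by simp only [List.length_cons] at hlen ⊢; omega)
      apply gswap34 alt_left alt_right
      exact gcore alt_left alt_right app ihz (by simp) (by simp)
        (by simp only [List.length_cons] at hlen ⊢; omega)
    · subst h
      apply gswap23 alt_left alt_right app ihz (by simp) (by simp) (by simp) (by simp) hlen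
      apply gswap12 alt_left alt_right app ihz (by simp) (by simp) (by simp) (by simp)
        (by simp only [List.length_cons] at hlen ⊢; omega)
      exact gcore alt_left alt_right app ihz (by simp) (by simp)
        (by simp only [List.length_cons] at hlen ⊢; omega)

end Induction

set_option maxHeartbeats 1000000 in
lemma main : ∀ (n : ℕ) (p q r : List Bool), p ≠ [] → q ≠ [] → r ≠ [] →
    p.length + q.length + r.length ≤ n →
    (ev a b p * ev a b q) * ev a b r = ev a b p * (ev a b q * ev a b r) := by
  intro n
  induction n using Nat.strong_induction_on with
  | _ n IH =>
  have ihz : ∀ p q r : List Bool, p ≠ [] → q ≠ [] → r ≠ [] →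
      p.length + q.length + r.length < n →
      (ev a b p * ev a b q) * ev a b r = ev a b p * (ev a b q * ev a b r) :=
    fun p q r hp hq hr h => IH _ h p q r hp hq hr le_rfl
  have app : ∀ p q : List Bool, p ≠ [] → q ≠ [] → p.length + q.length < n →
      ev a b (p ++ q) = ev a b p * ev a b q := by
    intro p
    induction p with
    | nil => intro q hp hq hlen; exact absurd rfl hp
    | cons x p' ihp =>
      intro q hp hq hlen
      cases p' with
      | nil =>
        show ev a b (x :: q) = ev a b [x] * ev a b q
        rw [ev_cons a b x hq]
        rfl
      | cons y p'' =>
        have h1 : ev a b ((x :: y :: p'') ++ q) = gg a b x * ev a b ((y :: p'') ++ q) :=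
          ev_cons a b x (by simp)
        rw [h1, ihp q (by simp) hq (by simp only [List.length_cons] at hlen ⊢; omega)]
        rw [ev_cons a b x (by simp)]
        exact (ihz [x] (y :: p'') q (by simp) (by simp) hq
          (by simp only [List.length_cons, List.length_singleton, List.length_nil] at hlen ⊢; omega)).symm
  intro p q r hp hq hr hlen
  have l1 := List.length_pos_of_ne_nil hp
  have l2 := List.length_pos_of_ne_nil hq
  have l3 := List.length_pos_of_ne_nil hr
  rcases p with _ | ⟨x, p'⟩; · exact absurd rfl hp
  rcases p' with _ | ⟨x2, p''⟩
  · -- p = [x]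
    rcases q with _ | ⟨y, q'⟩; · exact absurd rfl hq
    rcases q' with _ | ⟨y2, q''⟩
    · -- q = [y]
      rcases r with _ | ⟨z, r'⟩; · exact absurd rfl hr
      rcases r' with _ | ⟨z2, r''⟩
      · -- all singletons
        cases x <;> cases y <;> cases z <;>
          simp only [ev, gg, Bool.cond_true, Bool.cond_false] <;>
          first
            | exact alt_left _ _
            | exact alt_right _ _
            | exact flex alt_left alt_right _ _
      · -- r length ≥ 2
        have h := gzero alt_left alt_right app ihz (p := [z]) (q := z2 :: r'')
          (r := [x]) (s := [y]) (by simp) (by simp) (by simp) (by simp)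
          (by simp only [List.length_cons, List.length_singleton, List.length_nil] at hlen ⊢; omega)
        unfold GZ at h
        simp only [List.singleton_append] at h
        have h1 := ralt alt_left alt_right (ev a b [x]) (ev a b [y]) (ev a b (z :: z2 :: r''))
        have h2 := lalt alt_left alt_right (ev a b [x]) (ev a b (z :: z2 :: r'')) (ev a b [y])
        linear_combination (norm := abel1) h1 - h2 + h
    · -- q length ≥ 2
      have h := gzero alt_left alt_right app ihz (p := [y]) (q := y2 :: q'')
        (r := [x]) (s := r) (by simp) (by simp) (by simp) hr
        (by simp only [List.length_cons, List.length_singleton, List.length_nil] at hlen ⊢; omega)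
      unfold GZ at h
      simp only [List.singleton_append] at h
      have hl := lalt alt_left alt_right (ev a b [x]) (ev a b (y :: y2 :: q'')) (ev a b r)
      linear_combination (norm := abel1) hl - h
  · -- p length ≥ 2
    have h := gzero alt_left alt_right app ihz (p := [x]) (q := x2 :: p'') (r := q) (s := r)
      (by simp) (by simp) hq hr
      (by simp only [List.length_cons, List.length_singleton, List.length_nil] at hlen ⊢; omega)
    unfold GZ at h
    simpa only [List.singleton_append] using h

lemma mono_assoc (p q r : List Bool) (hp : p ≠ []) (hq : q ≠ []) (hr : r ≠ []) :
    (ev a b p * ev a b q) * ev a b r = ev a b p * (ev a b q * ev a b r) :=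
  main alt_left alt_right (p.length + q.length + r.length) p q r hp hq hr le_rfl

lemma appG (p q : List Bool) (hp : p ≠ []) (hq : q ≠ []) :
    ev a b (p ++ q) = ev a b p * ev a b q := by
  induction p with
  | nil => exact absurd rfl hp
  | cons x p' ihp =>
    cases p' with
    | nil =>
      show ev a b (x :: q) = ev a b [x] * ev a b q
      rw [ev_cons a b x hq]
      rfl
    | cons y p'' =>
      have h1 : ev a b ((x :: y :: p'') ++ q) = gg a b x * ev a b ((y :: p'') ++ q) :=
        ev_cons a b x (by simp)
      rw [h1, ihp (by simp)]
      rw [ev_cons a b x (by simp)]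
      exact (mono_assoc alt_left alt_right [x] (y :: p'') q (by simp) (by simp) hq).symm

omit alt_left alt_right in
lemma mono_def (x : A) :
    x ∈ ({y | ∃ l : List Bool, l ≠ [] ∧ ev a b l = y} : Set A) ↔
      ∃ l : List Bool, l ≠ [] ∧ ev a b l = x := Iff.rfl

lemma mul_mem_aux (x y : A)
    (hx : x ∈ AddSubgroup.closure ({y | ∃ l : List Bool, l ≠ [] ∧ ev a b l = y} : Set A))
    (hy : y ∈ AddSubgroup.closure ({y | ∃ l : List Bool, l ≠ [] ∧ ev a b l = y} : Set A)) :
    x * y ∈ AddSubgroup.closure ({y | ∃ l : List Bool, l ≠ [] ∧ ev a b l = y} : Set A) := by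
  induction hx using AddSubgroup.closure_induction with
  | mem w hw =>
    induction hy using AddSubgroup.closure_induction with
    | mem v hv =>
      obtain ⟨l1, hl1, rfl⟩ := hw
      obtain ⟨l2, hl2, rfl⟩ := hv
      exact AddSubgroup.subset_closure
        ⟨l1 ++ l2, fun h => hl1 (List.append_eq_nil_iff.mp h).1,
          appG alt_left alt_right l1 l2 hl1 hl2⟩
    | zero => rw [mul_zero]; exact zero_mem _
    | add v1 v2 _ _ ih1 ih2 => rw [mul_add]; exact add_mem ih1 ih2
    | neg v1 _ ih => rw [mul_neg]; exact neg_mem ih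
  | zero => rw [zero_mul]; exact zero_mem _
  | add x1 x2 _ _ ih1 ih2 => rw [add_mul]; exact add_mem ih1 ih2
  | neg x1 _ ih => rw [neg_mul]; exact neg_mem ih

def SR : NonUnitalSubring A where
  carrier := (AddSubgroup.closure ({y | ∃ l : List Bool, l ≠ [] ∧ ev a b l = y} : Set A) : Set A)
  zero_mem' := zero_mem _
  add_mem' := fun hx hy => add_mem hx hy
  neg_mem' := fun hx => neg_mem hx
  mul_mem' := fun hx hy => mul_mem_aux alt_left alt_right _ _ hx hy

lemma assoc_z (p q : List Bool) (hp : p ≠ []) (hq : q ≠ []) :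
    ∀ z ∈ AddSubgroup.closure ({y | ∃ l : List Bool, l ≠ [] ∧ ev a b l = y} : Set A),
      (ev a b p * ev a b q) * z = ev a b p * (ev a b q * z) := by
  intro z hz
  induction hz using AddSubgroup.closure_induction with
  | mem w hw =>
    obtain ⟨l, hl, rfl⟩ := hw
    exact mono_assoc alt_left alt_right p q l hp hq hl
  | zero => simp
  | add z1 z2 _ _ ih1 ih2 => simp only [mul_add, ih1, ih2]
  | neg z1 _ ih => simp only [mul_neg, ih]

lemma assoc_y (p : List Bool) (hp : p ≠ []) :
    ∀ y ∈ AddSubgroup.closure ({y | ∃ l : List Bool, l ≠ [] ∧ ev a b l = y} : Set A),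
      ∀ z ∈ AddSubgroup.closure ({y | ∃ l : List Bool, l ≠ [] ∧ ev a b l = y} : Set A),
        (ev a b p * y) * z = ev a b p * (y * z) := by
  intro y hy
  induction hy using AddSubgroup.closure_induction with
  | mem w hw =>
    obtain ⟨l, hl, rfl⟩ := hw
    intro z hz
    exact assoc_z alt_left alt_right p l hp hl z hz
  | zero => intro z hz; simp
  | add y1 y2 _ _ ih1 ih2 =>
    intro z hz
    simp only [mul_add, add_mul, ih1 z hz, ih2 z hz]
  | neg y1 _ ih =>
    intro z hz
    simp only [neg_mul, mul_neg, ih z hz]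

lemma assoc_x :
    ∀ x ∈ AddSubgroup.closure ({y | ∃ l : List Bool, l ≠ [] ∧ ev a b l = y} : Set A),
      ∀ y ∈ AddSubgroup.closure ({y | ∃ l : List Bool, l ≠ [] ∧ ev a b l = y} : Set A),
        ∀ z ∈ AddSubgroup.closure ({y | ∃ l : List Bool, l ≠ [] ∧ ev a b l = y} : Set A),
          (x * y) * z = x * (y * z) := by
  intro x hx
  induction hx using AddSubgroup.closure_induction with
  | mem w hw =>
    obtain ⟨l, hl, rfl⟩ := hw
    intro y hy z hz
    exact assoc_y alt_left alt_right l hl y hy z hz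
  | zero => intro y hy z hz; simp
  | add x1 x2 _ _ ih1 ih2 =>
    intro y hy z hz
    simp only [add_mul, ih1 y hy z hz, ih2 y hy z hz]
  | neg x1 _ ih =>
    intro y hy z hz
    simp only [neg_mul, ih y hy z hz]

end ArtinAux

/-- Artin's theorem: in an alternative ring, the subring generated by any two
elements is associative. -/
theorem artin_two_generated_subring_associative {A : Type*} [NonUnitalNonAssocRing A]
    (alt_left : ∀ a b : A, (a * a) * b = a * (a * b))
    (alt_right : ∀ a b : A, (a * b) * b = a * (b * b)) (a b : A) :
    ∀ x ∈ NonUnitalSubring.closure ({a, b} : Set A),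
      ∀ y ∈ NonUnitalSubring.closure ({a, b} : Set A),
        ∀ z ∈ NonUnitalSubring.closure ({a, b} : Set A),
          (x * y) * z = x * (y * z) := by
  intro x hx y hy z hz
  have hsub : NonUnitalSubring.closure ({a, b} : Set A) ≤
      ArtinAux.SR alt_left alt_right (a := a) (b := b) := by
    rw [NonUnitalSubring.closure_le]
    rintro t (rfl | rfl)
    · exact AddSubgroup.subset_closure ⟨[true], by simp, rfl⟩
    · exact AddSubgroup.subset_closure ⟨[false], by simp, rfl⟩
  exact ArtinAux.assoc_x alt_left alt_right x (hsub hx) y (hsub hy) z (hsub hz)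
end

section
/- In any alternative ring, the middle Moufang identity holds: (zx)(yz) = (z(xy))z for all x, y, z. -/
/-- Middle Moufang identity in an alternative ring. -/
theorem middle_moufang {A : Type*} [NonUnitalNonAssocRing A]
    (alt_left : ∀ a b : A, (a * a) * b = a * (a * b))
    (alt_right : ∀ a b : A, (a * b) * b = a * (b * b)) :
    ∀ x y z : A, (z * x) * (y * z) = (z * (x * y)) * z := by
  have alt1 : ∀ a b : A, a * a * b - a * (a * b) = 0 := fun a b => sub_eq_zero.2 (alt_left a b)
  have alt2 : ∀ a b : A, a * b * b - a * (b * b) = 0 := fun a b => sub_eq_zero.2 (alt_right a b)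
  have sk12 : ∀ a b c : A, (a * b * c - a * (b * c)) + (b * a * c - b * (a * c)) = 0 := by
    intro a b c
    have h := alt_left (a + b) c
    simp only [add_mul, mul_add] at h
    linear_combination (norm := abel1) h - alt_left a c - alt_left b c
  have sk23 : ∀ a b c : A, (a * b * c - a * (b * c)) + (a * c * b - a * (c * b)) = 0 := by
    intro a b c
    have h := alt_right a (b + c)
    simp only [add_mul, mul_add] at h
    linear_combination (norm := abel1) h - alt_right a b - alt_right a c
  intro x y z
  linear_combination (norm := (simp only [mul_add, add_mul, mul_sub, sub_mul, mul_zero, zero_mul]; abel1))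
    (- sk12 x (z*y) z) + sk23 x (z*y) z - sk12 x (z*z) y + sk12 (x*y) z z - alt2 (x*y) z
    + sk12 (y*x) z z - alt2 (y*x) z - sk12 (x*z) y z + sk23 (x*z) y z - sk23 (z*x) y z
    + sk12 (z*x) z y + sk23 y (x*z) z - sk12 y z (x*z) - sk23 z (x*y) z
    + z * sk12 x y z + sk12 x y z * z - z * sk23 x y z - sk23 x y z * z
    + z * sk12 x z y + sk12 x z y * z - sk23 y x z * z + sk12 y z x * z
    + alt1 z x * y - alt2 x z * y - x * alt1 z y
end

section
/- In any alternative ring, the right Moufang identity holds: ((xz)y)z = x((zy)z) for all x, y, z. -/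
/-- Right Moufang identity in an alternative ring. -/
theorem right_moufang {A : Type*} [NonUnitalNonAssocRing A]
    (alt_left : ∀ a b : A, (a * a) * b = a * (a * b))
    (alt_right : ∀ a b : A, (a * b) * b = a * (b * b)) :
    ∀ x y z : A, ((x * z) * y) * z = x * ((z * y) * z) := by
  have pl : ∀ a b c : A, (a * b) * c + (b * a) * c = a * (b * c) + b * (a * c) := by
    intro a b c
    have h := alt_left (a + b) c
    simp only [add_mul, mul_add] at h
    linear_combination (norm := abel1) h - alt_left a c - alt_left b c
  have ql : ∀ a b c : A, (a * b) * c + (a * c) * b = a * (b * c) + a * (c * b) := by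
    intro a b c
    have h := alt_right a (b + c)
    simp only [add_mul, mul_add] at h
    linear_combination (norm := abel1) h - alt_right a b - alt_right a c
  intro x y z
  linear_combination (norm := (simp only [mul_add, add_mul]; try abel1))
    - (pl z y (x * z)) + (pl z y (z * x)) + (ql x z (z * y)) + (pl z (y * z) x) + (pl z x (z * y)) + (pl z x (y * z)) - (pl z (x * z) y) + (ql y z (x * z)) + (pl z (z * x) y) + (pl z (y * x) z) - (ql x (z * z) y) - (ql x (z * z) y) - (ql y (z * z) x) + (ql (x * z) y z) + (ql (x * z) y z) + (ql (x * z) y z) + (pl y x (z * z)) + (pl y x (z * z)) - (pl y (x * z) z) - (pl y (x * z) z) - (ql z y (z * x)) - (pl (z * y) x z) - (ql z (y * z) x) - (congrArg (fun t => x * t) (alt_left z y)) - (congrArg (fun t => x * t) (alt_left z y)) + (congrArg (fun t => x * t) (alt_right y z)) - (congrArg (fun t => t * x) (alt_right y z)) - (congrArg (fun t => y * t) (alt_left z x)) - (congrArg (fun t => y * t) (alt_right x z)) - (congrArg (fun t => t * y) (alt_right x z)) - (congrArg (fun t => x * t) (pl z y z)) + (congrArg (fun t => t * z) (pl z y x))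 - (congrArg (fun t => z * t) (ql x z y)) - (congrArg (fun t => t * y) (pl z x z)) - (congrArg (fun t => t * z) (ql y z x)) + (congrArg (fun t => z * t) (pl y x z))
end

section
/- For any two octonions a, b, the map D_{a,b}(x) = [[a,b], x] - 3[a,b,x] is a derivation of the octonions: D_{a,b}(xy) = D_{a,b}(x) y + x D_{a,b}(y) for all x, y. -/
noncomputable section

/-- The octonions, constructed from the quaternions via the Cayley–Dickson doubling. -/
structure Octonion : Type where
  q1 : Quaternion ℝ
  q2 : Quaternion ℝ

namespace Octonion

instance : Zero Octonion := ⟨⟨0, 0⟩⟩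
instance : One Octonion := ⟨⟨1, 0⟩⟩
instance : Add Octonion := ⟨fun x y => ⟨x.q1 + y.q1, x.q2 + y.q2⟩⟩
instance : Neg Octonion := ⟨fun x => ⟨-x.q1, -x.q2⟩⟩
instance : Sub Octonion := ⟨fun x y => ⟨x.q1 - y.q1, x.q2 - y.q2⟩⟩

/-- Cayley–Dickson multiplication. -/
instance : Mul Octonion :=
  ⟨fun x y => ⟨x.q1 * y.q1 - star y.q2 * x.q2, y.q2 * x.q1 + x.q2 * star y.q1⟩⟩

instance : SMul ℝ Octonion := ⟨fun r x => ⟨r • x.q1, r • x.q2⟩⟩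

/-- Octonionic conjugation. -/
def conj (x : Octonion) : Octonion := ⟨star x.q1, -x.q2⟩

/-- The real part of an octonion. -/
def re (x : Octonion) : ℝ := x.q1.re

/-- The squared norm of an octonion. -/
def normSq (x : Octonion) : ℝ := Quaternion.normSq x.q1 + Quaternion.normSq x.q2

/-- The multiplicative inverse of a nonzero octonion. -/
instance : Inv Octonion := ⟨fun x => (normSq x)⁻¹ • conj x⟩

/-- The commutator of two octonions. -/
def comm (x y : Octonion) : Octonion := x * y - y * x

/-- The associator of three octonions. -/
def assoc (x y z : Octonion) : Octonion := (x * y) * z - x * (y * z)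

/-- The derivation `D_{a,b}` of the octonions. -/
def D (a b x : Octonion) : Octonion := comm (comm a b) x - (3 : ℝ) • assoc a b x

end Octonion


namespace Octonion

theorem oext {x y : Octonion} (h1 : x.q1 = y.q1) (h2 : x.q2 = y.q2) : x = y := by
  cases x; cases y; simp_all

lemma mul_q1 (x y : Octonion) : (x*y).q1 = x.q1*y.q1 - star y.q2 * x.q2 := rfl
lemma mul_q2 (x y : Octonion) : (x*y).q2 = y.q2 * x.q1 + x.q2 * star y.q1 := rfl
lemma sub_q1 (x y : Octonion) : (x-y).q1 = x.q1 - y.q1 := rfl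
lemma sub_q2 (x y : Octonion) : (x-y).q2 = x.q2 - y.q2 := rfl
lemma add_q1 (x y : Octonion) : (x+y).q1 = x.q1 + y.q1 := rfl
lemma add_q2 (x y : Octonion) : (x+y).q2 = x.q2 + y.q2 := rfl
lemma smul_q1 (r : ℝ) (x : Octonion) : (r • x).q1 = r • x.q1 := rfl
lemma smul_q2 (r : ℝ) (x : Octonion) : (r • x).q2 = r • x.q2 := rfl

end Octonion

open Octonion


set_option maxHeartbeats 8000000 in
theorem D_is_derivation (a b x y : Octonion) :
    D a b (x * y) = D a b x * y + x * D a b y := by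
  apply oext <;>
  · simp only [Octonion.D, Octonion.comm, Octonion.assoc, mul_q1, mul_q2, sub_q1, sub_q2, add_q1, add_q2, smul_q1, smul_q2]
    ext <;>
      simp only [Quaternion.re_mul, Quaternion.imI_mul, Quaternion.imJ_mul, Quaternion.imK_mul,
        Quaternion.re_sub, Quaternion.imI_sub, Quaternion.imJ_sub, Quaternion.imK_sub,
        Quaternion.re_add, Quaternion.imI_add, Quaternion.imJ_add, Quaternion.imK_add,
        Quaternion.re_star, Quaternion.imI_star, Quaternion.imJ_star, Quaternion.imK_star,
        Quaternion.re_smul, Quaternion.imI_smul, Quaternion.imJ_smul, Quaternion.imK_smul,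
        smul_eq_mul] <;>
      ring
end
end

section
/- For any 2×2 matrix M with entries in the quaternions, and any 2×2 Hermitian quaternionic matrix X, det(M X M†) = det(M M†) · det(X), where for a Hermitian matrix ((α, x),(x̄, β)) with α, β real the determinant is α β − ‖x‖², and det(M M†) = ‖a‖²‖d‖² + ‖b‖²‖c‖² − 2 Re(a c̄ d b̄) for M = ((a,b),(c,d)). -/
open Matrix

/-- The determinant of a `2 × 2` Hermitian quaternionic matrix:
product of the (real) diagonal entries minus the squared norm of the
off-diagonal entry. -/
def hdet (X : Matrix (Fin 2) (Fin 2) (Quaternion ℝ)) : ℝ :=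
  (X 0 0).re * (X 1 1).re - Quaternion.normSq (X 0 1)

set_option maxHeartbeats 1000000 in
private lemma hdet_key (a b c d x p q : Quaternion ℝ)
    (hp1 : p.imI = 0) (hp2 : p.imJ = 0) (hp3 : p.imK = 0)
    (hq1 : q.imI = 0) (hq2 : q.imJ = 0) (hq3 : q.imK = 0) :
    ((a * p + b * star x) * star a + (a * x + b * q) * star b).re *
      ((c * p + d * star x) * star c + (c * x + d * q) * star d).re -
      Quaternion.normSq ((a * p + b * star x) * star c + (a * x + b * q) * star d)
    = ((a * star a + b * star b).re * (c * star c + d * star d).re -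
        Quaternion.normSq (a * star c + b * star d)) *
      (p.re * q.re - Quaternion.normSq x) := by
  simp only [Quaternion.normSq_def', Quaternion.re_mul, Quaternion.imI_mul, Quaternion.imJ_mul,
    Quaternion.imK_mul, Quaternion.re_add, Quaternion.imI_add, Quaternion.imJ_add,
    Quaternion.imK_add, Quaternion.re_star, Quaternion.imI_star, Quaternion.imJ_star,
    Quaternion.imK_star]
  obtain ⟨a1,a2,a3,a4⟩ := a
  obtain ⟨b1,b2,b3,b4⟩ := b
  obtain ⟨c1,c2,c3,c4⟩ := c
  obtain ⟨d1,d2,d3,d4⟩ := d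
  obtain ⟨x1,x2,x3,x4⟩ := x
  obtain ⟨p1,p2,p3,p4⟩ := p
  obtain ⟨q1,q2,q3,q4⟩ := q
  simp_all [Quaternion.normSq_def', Quaternion.re_mul,
    Quaternion.imI_mul, Quaternion.imJ_mul, Quaternion.imK_mul]
  ring

private lemma hdet_mmh (a b c d : Quaternion ℝ) :
    (a * star a + b * star b).re * (c * star c + d * star d).re -
      Quaternion.normSq (a * star c + b * star d)
    = Quaternion.normSq a * Quaternion.normSq d +
        Quaternion.normSq b * Quaternion.normSq c -
        2 * (a * star c * d * star b).re := by
  simp only [Quaternion.normSq_def', Quaternion.re_mul, Quaternion.imI_mul, Quaternion.imJ_mul,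
    Quaternion.imK_mul, Quaternion.re_add, Quaternion.imI_add, Quaternion.imJ_add,
    Quaternion.imK_add, Quaternion.re_star, Quaternion.imI_star, Quaternion.imJ_star,
    Quaternion.imK_star]
  obtain ⟨a1,a2,a3,a4⟩ := a
  obtain ⟨b1,b2,b3,b4⟩ := b
  obtain ⟨c1,c2,c3,c4⟩ := c
  obtain ⟨d1,d2,d3,d4⟩ := d
  simp [Quaternion.normSq_def', Quaternion.re_mul,
    Quaternion.imI_mul, Quaternion.imJ_mul, Quaternion.imK_mul]
  ring

theorem hdet_hermitian_conj (M X : Matrix (Fin 2) (Fin 2) (Quaternion ℝ))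
    (hX : X.IsHermitian) :
    hdet (M * X * Mᴴ) = hdet (M * Mᴴ) * hdet X ∧
    hdet (M * Mᴴ) =
      Quaternion.normSq (M 0 0) * Quaternion.normSq (M 1 1) +
        Quaternion.normSq (M 0 1) * Quaternion.normSq (M 1 0) -
        2 * (M 0 0 * star (M 1 0) * M 1 1 * star (M 0 1)).re := by
  have h10 : X 1 0 = star (X 0 1) := by
    have := congrFun (congrFun hX.symm 1) 0
    simpa [conjTranspose_apply] using this
  have h00 : star (X 0 0) = X 0 0 := by
    have := congrFun (congrFun hX 0) 0
    simpa [conjTranspose_apply] using this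
  have h11 : star (X 1 1) = X 1 1 := by
    have := congrFun (congrFun hX 1) 1
    simpa [conjTranspose_apply] using this
  have hp1 : (X 0 0).imI = 0 := by
    have := congrArg QuaternionAlgebra.imI h00; simp at this; linarith
  have hp2 : (X 0 0).imJ = 0 := by
    have := congrArg QuaternionAlgebra.imJ h00; simp at this; linarith
  have hp3 : (X 0 0).imK = 0 := by
    have := congrArg QuaternionAlgebra.imK h00; simp at this; linarith
  have hq1 : (X 1 1).imI = 0 := by
    have := congrArg QuaternionAlgebra.imI h11; simp at this; linarith
  have hq2 : (X 1 1).imJ = 0 := by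
    have := congrArg QuaternionAlgebra.imJ h11; simp at this; linarith
  have hq3 : (X 1 1).imK = 0 := by
    have := congrArg QuaternionAlgebra.imK h11; simp at this; linarith
  constructor
  · show _ = (_ - _) * _
    simp only [hdet, Matrix.mul_apply, Fin.sum_univ_two, conjTranspose_apply, h10,
      Matrix.mul_apply]
    exact hdet_key (M 0 0) (M 0 1) (M 1 0) (M 1 1) (X 0 1) (X 0 0) (X 1 1)
      hp1 hp2 hp3 hq1 hq2 hq3
  · simp only [hdet, Matrix.mul_apply, Fin.sum_univ_two, conjTranspose_apply]
    exact hdet_mmh (M 0 0) (M 0 1) (M 1 0) (M 1 1)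
end
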